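/- Each element of the set W^{(r)} of minimal-length right coset representatives of W(B_{r-1}) in W(B_r) has a unique reduced expression. -/

import Mathlib

open CoxeterSystem LaurentPolynomial

noncomputable section

/-- The Laurent polynomial ring `A = ℤ[v, v⁻¹]`, with `v = T 1`. -/
abbrev LA := LaurentPolynomial ℤ

/-- `q_c = v + v⁻¹`. -/
def qc : LA := T 1 + T (-1)

/-- The subring `A⁻ = ℤ[v⁻¹]` of `A`. -/
def LAminus : Subring LA := Subring.closure {T (-1)}

variable {B : Type*} {W : Type*} [Group W]

/-- `w` is complex: it has a reduced factorization `x₁ * w_{ss'} * x₂`, where `w_{ss'}` is the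
longest element of a finite rank-2 parabolic subgroup `⟨s, s'⟩` with `s`, `s'` non-commuting
(`3 ≤ M i i'`, which also excludes infinite bonds `M i i' = 0`). -/
def CoxeterSystem.IsComplexElt {M : CoxeterMatrix B} (cs : CoxeterSystem M W) (w : W) : Prop :=
  ∃ (x₁ x₂ : W) (i i' : B), 3 ≤ M i i' ∧
    w = x₁ * cs.wordProd (CoxeterSystem.braidWord M i i') * x₂ ∧
    cs.length w = cs.length x₁ + M i i' + cs.length x₂

/-- `w` is fully commutative, i.e. not complex; `cs.FC` plays the role of the set `W_c`. -/
def CoxeterSystem.FC {M : CoxeterMatrix B} (cs : CoxeterSystem M W) (w : W) : Prop :=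
  ¬ cs.IsComplexElt w

/-- Bruhat--Chevalley order, via the subword characterization. -/
def CoxeterSystem.BruhatLE {M : CoxeterMatrix B} (cs : CoxeterSystem M W) (x w : W) : Prop :=
  ∃ ω : List B, cs.IsReduced ω ∧ cs.wordProd ω = w ∧
    ∃ κ : List B, κ.Sublist ω ∧ cs.wordProd κ = x

section UniqueReducedAux

set_option linter.unusedSectionVars false

namespace UniqAux

variable {W : Type*} [Group W] {r : ℕ} [NeZero r]

lemma rpos : 0 < r := Nat.pos_of_ne_zero (NeZero.ne r)

lemma BM2 (i j : Fin r) (h : (i:ℕ) ≠ j) (h1 : (i:ℕ)+1 ≠ j) (h2 : (j:ℕ)+1 ≠ i) :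
    CoxeterMatrix.Bₙ r i j = 2 := by
  have hi := i.isLt; have hj := j.isLt
  show (CoxeterMatrix.Bₙ r).M i j = 2
  simp only [CoxeterMatrix.Bₙ, CoxeterMatrix.B, Matrix.of_apply]
  rw [if_neg (by simpa [Fin.ext_iff] using h), if_neg (by omega), if_neg (by omega)]

lemma BM3 (i j : Fin r) (h : (i:ℕ)+1 = j) (hj : (j:ℕ)+1 ≤ r - 1) :
    CoxeterMatrix.Bₙ r i j = 3 := by
  have hi := i.isLt; have hj' := j.isLt
  show (CoxeterMatrix.Bₙ r).M i j = 3
  simp only [CoxeterMatrix.Bₙ, CoxeterMatrix.B, Matrix.of_apply]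
  rw [if_neg (by simp [Fin.ext_iff]; omega), if_neg (by omega), if_pos (by omega)]

lemma BM3' (i j : Fin r) (h : (i:ℕ)+1 = j) (hj : (j:ℕ)+1 ≤ r - 1) :
    CoxeterMatrix.Bₙ r j i = 3 := by
  have hi := i.isLt; have hj' := j.isLt
  show (CoxeterMatrix.Bₙ r).M j i = 3
  simp only [CoxeterMatrix.Bₙ, CoxeterMatrix.B, Matrix.of_apply]
  rw [if_neg (by simp [Fin.ext_iff]; omega), if_neg (by omega), if_pos (by omega)]

lemma BM4 (i j : Fin r) (h : (i:ℕ)+1 = j) (hj : (j:ℕ) = r - 1) :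
    CoxeterMatrix.Bₙ r j i = 4 := by
  have hi := i.isLt; have hj' := j.isLt
  show (CoxeterMatrix.Bₙ r).M j i = 4
  simp only [CoxeterMatrix.Bₙ, CoxeterMatrix.B, Matrix.of_apply]
  rw [if_neg (by simp [Fin.ext_iff]; omega), if_pos (by omega)]

variable (cs : CoxeterSystem (CoxeterMatrix.Bₙ r) W)

local prefix:100 "σ" => cs.simple
local prefix:100 "π" => cs.wordProd
local prefix:100 "ℓ" => cs.length

lemma comm2 {i j : Fin r} (h : CoxeterMatrix.Bₙ r i j = 2) : σ i * σ j = σ j * σ i := by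
  have e := cs.simple_mul_simple_pow i j
  rw [show (CoxeterMatrix.Bₙ r i j) = 2 from h, pow_two] at e
  have : σ i * σ j = (σ i * σ j)⁻¹ := by
    rw [eq_inv_iff_mul_eq_one]; exact e
  rw [this, mul_inv_rev, cs.inv_simple, cs.inv_simple]

lemma braid3 {i j : Fin r} (h : CoxeterMatrix.Bₙ r i j = 3) :
    σ i * σ j * σ i = σ j * σ i * σ j := by
  have e := cs.simple_mul_simple_pow i j
  rw [show (CoxeterMatrix.Bₙ r i j) = 3 from h] at e
  have this1 : σ i * σ j * σ i = (σ j * σ i * σ j)⁻¹ := by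
    rw [eq_inv_iff_mul_eq_one]
    have h3 : (σ i * σ j)^3 = σ i * σ j * σ i * (σ j * σ i * σ j) := by
      rw [pow_succ, pow_succ, pow_one]; simp [mul_assoc]
    rw [← h3]; exact e
  rw [this1]; simp [mul_inv_rev, cs.inv_simple, mul_assoc]

lemma braid4 {i j : Fin r} (h : CoxeterMatrix.Bₙ r i j = 4) :
    σ i * σ j * σ i * σ j = σ j * σ i * σ j * σ i := by
  have e := cs.simple_mul_simple_pow i j
  rw [show (CoxeterMatrix.Bₙ r i j) = 4 from h] at e
  have e2 : (σ i * σ j)^2 * (σ i * σ j)^2 = 1 := by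
    rw [← pow_add]; exact e
  have e3 : (σ i * σ j)^2 = ((σ i * σ j)^2)⁻¹ := by
    rw [eq_inv_iff_mul_eq_one]; exact e2
  have e4 : ((σ i * σ j)^2)⁻¹ = (σ j * σ i)^2 := by
    rw [← inv_pow, mul_inv_rev, cs.inv_simple, cs.inv_simple]
  have e5 : (σ i * σ j)^2 = (σ j * σ i)^2 := e3.trans e4
  have := e5
  simpa [pow_two, mul_assoc] using this



/-- The generator with index `k % r`. -/
def fk (r : ℕ) [NeZero r] (k : ℕ) : Fin r := ⟨k % r, Nat.mod_lt _ rpos⟩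

lemma fk_val (k : ℕ) (h : k < r) : ((fk r k : Fin r) : ℕ) = k := Nat.mod_eq_of_lt h

/-- The `k`-th letter (as a natural number) of the canonical chain word. -/
def cn (r k : ℕ) : ℕ := if k < r then k else 2*r - 2 - k

lemma cn_lt (k : ℕ) : cn r k < r := by
  unfold cn; split
  · assumption
  · have := rpos (r := r); omega

/-- Product of simple reflections with indices `a, a+1, ..., a+n-1`. -/
def seg (a n : ℕ) : W := cs.wordProd ((List.range' a n).map (fk r))

lemma seg_zero (a : ℕ) : seg cs a 0 = 1 := by simp [seg]

lemma seg_succ_r (a n : ℕ) : seg cs a (n+1) = seg cs a n * σ (fk r (a+n)) := by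
  rw [seg, seg, List.range'_1_concat, List.map_append, cs.wordProd_append]
  simp

lemma seg_succ_l (a n : ℕ) : seg cs a (n+1) = σ (fk r a) * seg cs (a+1) n := by
  rw [seg, seg, List.range'_succ, List.map_cons, cs.wordProd_cons]

lemma simple_comm_list (i : Fin r) (l : List (Fin r))
    (h : ∀ j ∈ l, σ i * σ j = σ j * σ i) : σ i * π l = π l * σ i := by
  induction l with
  | nil => simp
  | cons a l ih =>
    rw [cs.wordProd_cons, ← mul_assoc, h a List.mem_cons_self, mul_assoc,
      ih (fun j hj => h j (List.mem_cons_of_mem a hj)), mul_assoc]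

lemma comm_seg {a n : ℕ} (hr : a + n ≤ r) (i : Fin r)
    (h : a + n + 1 ≤ (i:ℕ) ∨ (i:ℕ) + 2 ≤ a) : σ i * seg cs a n = seg cs a n * σ i := by
  apply simple_comm_list
  intro j hj
  rw [List.mem_map] at hj
  obtain ⟨k, hk, rfl⟩ := hj
  rw [List.mem_range'_1] at hk
  have hkr : k < r := by omega
  have hjv : ((fk r k : Fin r) : ℕ) = k := fk_val k hkr
  exact comm2 cs (BM2 i (fk r k) (by omega) (by omega) (by omega))

/-- The canonical chain word of length `m`. -/
def cw (r : ℕ) [NeZero r] (m : ℕ) : List (Fin r) := (List.range m).map (fun k => fk r (cn r k))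

/-- The canonical chain element of length `m`. -/
def uu (m : ℕ) : W := cs.wordProd (cw r m)

lemma cw_length (m : ℕ) : (cw r m).length = m := by simp [cw]

lemma uu_zero : uu cs 0 = 1 := by simp [uu, cw]

lemma uu_succ (m : ℕ) : uu cs (m+1) = uu cs m * σ (fk r (cn r m)) := by
  rw [uu, uu, cw, cw, List.range_succ, List.map_append, cs.wordProd_append]
  simp

lemma uu_len (m : ℕ) : ℓ (uu cs m) ≤ m := by
  have := cs.length_wordProd_le (cw r m)
  rwa [cw_length] at this

lemma uu_asc {m : ℕ} (hm : m ≤ r) : uu cs m = seg cs 0 m := by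
  rw [uu, seg, cw, List.range_eq_range']
  congr 1
  apply List.map_congr_left
  intro k hk
  rw [List.mem_range'_1] at hk
  rw [cn, if_pos (by omega)]

lemma uu_desc {t : ℕ} (ht : t ≤ r-1) : uu cs (r+t) = uu cs r * (seg cs (r-1-t) t)⁻¹ := by
  induction t with
  | zero => simp [seg_zero]
  | succ t ih =>
    have ht' : t ≤ r - 1 := by omega
    have h1 : cn r (r+t) = r-2-t := by rw [cn, if_neg (by omega)]; omega
    have h2 : seg cs (r-1-(t+1)) (t+1) = σ (fk r (r-2-t)) * seg cs (r-1-t) t := by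
      have : r-1-(t+1) = r-2-t := by omega
      rw [this, seg_succ_l]
      congr 2
      omega
    rw [show r + (t+1) = (r+t)+1 by omega, uu_succ, ih ht', h1, h2, mul_inv_rev,
      cs.inv_simple, mul_assoc]

lemma seg_split (a n₁ n₂ : ℕ) : seg cs a (n₁+n₂) = seg cs a n₁ * seg cs (a+n₁) n₂ := by
  rw [seg, seg, seg, ← cs.wordProd_append, ← List.map_append]
  congr 2
  rw [List.range'_append_1, Nat.add_comm]

lemma seg_one (a : ℕ) : seg cs a 1 = σ (fk r a) := by
  simp [seg, List.range'_one]

lemma seg_pair (a : ℕ) : seg cs a 2 = σ (fk r a) * σ (fk r (a+1)) := by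
  rw [show (2:ℕ) = 1+1 from rfl, seg_split cs a 1 1, seg_one, seg_one]

lemma seg_two (a : ℕ) : seg cs 0 (a+2) = seg cs 0 a * σ (fk r a) * σ (fk r (a+1)) := by
  rw [seg_split cs 0 a 2, Nat.zero_add, seg_pair, ← mul_assoc]

lemma seg_two_l (a u : ℕ) : seg cs a (u+2) = σ (fk r a) * σ (fk r (a+1)) * seg cs (a+2) u := by
  rw [show u + 2 = 2 + u by omega, seg_split cs a 2 u, seg_pair]

lemma Easc (a : ℕ) (h : a + 3 ≤ r) :
    σ (fk r (a+1)) * uu cs (a+2) * σ (fk r a) = uu cs (a+2) := by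
  have hcomm : σ (fk r (a+1)) * seg cs 0 a = seg cs 0 a * σ (fk r (a+1)) := by
    apply comm_seg cs (by omega)
    left
    rw [fk_val _ (by omega)]
    omega
  have hb : σ (fk r (a+1)) * σ (fk r a) * σ (fk r (a+1))
      = σ (fk r a) * σ (fk r (a+1)) * σ (fk r a) :=
    braid3 cs (BM3' (fk r a) (fk r (a+1))
      (by rw [fk_val _ (by omega), fk_val _ (by omega)])
      (by rw [fk_val _ (by omega)]; omega))
  rw [uu_asc cs (by omega), seg_two]
  simp only [← mul_assoc]
  rw [hcomm]
  have e1 : seg cs 0 a * σ (fk r (a+1)) * σ (fk r a) * σ (fk r (a+1)) * σ (fk r a)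
      = seg cs 0 a * (σ (fk r (a+1)) * σ (fk r a) * σ (fk r (a+1))) * σ (fk r a) := by
    simp [mul_assoc]
  rw [e1, hb]
  simp [mul_assoc, cs.simple_mul_simple_self]

lemma seg_eq_of {n a k : ℕ} (h : n = a + 2 + k) :
    seg cs 0 n = seg cs 0 a * σ (fk r a) * σ (fk r (a+1)) * seg cs (a+2) k := by
  subst h
  rw [seg_split cs 0 (a+2) k, seg_two, Nat.zero_add]

lemma Pcomm {j : ℕ} (hj : j + 3 ≤ r) :
    σ (fk r (j+1)) * uu cs r = uu cs r * σ (fk r j) := by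
  have hdec := seg_eq_of cs (show r = j + 2 + (r - j - 2) by omega)
  have hcomm : σ (fk r (j+1)) * seg cs 0 j = seg cs 0 j * σ (fk r (j+1)) := by
    apply comm_seg cs (by omega)
    left
    rw [fk_val _ (by omega)]
    omega
  have hcomm2 : σ (fk r j) * seg cs (j+2) (r-j-2) = seg cs (j+2) (r-j-2) * σ (fk r j) := by
    apply comm_seg cs (by omega)
    right
    rw [fk_val _ (by omega)]
  have hb : σ (fk r (j+1)) * σ (fk r j) * σ (fk r (j+1))
      = σ (fk r j) * σ (fk r (j+1)) * σ (fk r j) :=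
    braid3 cs (BM3' (fk r j) (fk r (j+1))
      (by rw [fk_val _ (by omega), fk_val _ (by omega)])
      (by rw [fk_val _ (by omega)]; omega))
  rw [uu_asc cs (le_refl r), hdec]
  simp only [← mul_assoc]
  rw [hcomm]
  have e1 : seg cs 0 j * σ (fk r (j+1)) * σ (fk r j) * σ (fk r (j+1)) * seg cs (j+2) (r-j-2)
      = seg cs 0 j * (σ (fk r (j+1)) * σ (fk r j) * σ (fk r (j+1))) * seg cs (j+2) (r-j-2) := by
    simp [mul_assoc]
  rw [e1, hb]
  have e2 : seg cs 0 j * (σ (fk r j) * σ (fk r (j+1)) * σ (fk r j)) * seg cs (j+2) (r-j-2)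
      = seg cs 0 j * σ (fk r j) * σ (fk r (j+1)) * (σ (fk r j) * seg cs (j+2) (r-j-2)) := by
    simp [mul_assoc]
  rw [e2, hcomm2, ← mul_assoc]

lemma comm_inv {x y : W} (h : x * y = y * x) : x * y⁻¹ = y⁻¹ * x :=
  (Commute.inv_right (h : Commute x y)).eq

lemma Hone (h2 : 2 ≤ r) : σ (fk r (r-1)) * uu cs (r+1) = uu cs (r+1) * σ (fk r (r-1)) := by
  have hdesc : uu cs (r+1) = uu cs r * σ (fk r (r-2)) := by
    rw [uu_desc cs (show 1 ≤ r-1 by omega), show r-1-1 = r-2 by omega, seg_one, cs.inv_simple]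
  have hdec : uu cs r = seg cs 0 (r-2) * σ (fk r (r-2)) * σ (fk r (r-1)) := by
    rw [uu_asc cs (le_refl r), seg_eq_of cs (show r = (r-2) + 2 + 0 by omega), seg_zero, mul_one,
      show r-2+1 = r-1 by omega]
  have hcomm : σ (fk r (r-1)) * seg cs 0 (r-2) = seg cs 0 (r-2) * σ (fk r (r-1)) := by
    apply comm_seg cs (by omega)
    left
    rw [fk_val _ (by omega)]
    omega
  have hb : σ (fk r (r-1)) * σ (fk r (r-2)) * σ (fk r (r-1)) * σ (fk r (r-2))
      = σ (fk r (r-2)) * σ (fk r (r-1)) * σ (fk r (r-2)) * σ (fk r (r-1)) :=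
    braid4 cs (BM4 (fk r (r-2)) (fk r (r-1))
      (by rw [fk_val _ (by omega), fk_val _ (by omega)]; omega)
      (by rw [fk_val _ (by omega)]))
  rw [hdesc, hdec]
  simp only [← mul_assoc]
  rw [hcomm]
  have e1 : seg cs 0 (r-2) * σ (fk r (r-1)) * σ (fk r (r-2)) * σ (fk r (r-1)) * σ (fk r (r-2))
      = seg cs 0 (r-2) * (σ (fk r (r-1)) * σ (fk r (r-2)) * σ (fk r (r-1)) * σ (fk r (r-2))) := by
    simp [mul_assoc]
  rw [e1, hb]
  simp only [← mul_assoc]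

lemma Tid (a t : ℕ) (h : a + t + 1 = r) (h2 : 2 ≤ t) :
    (seg cs a t)⁻¹ * σ (fk r (a+1)) = σ (fk r a) * (seg cs a t)⁻¹ := by
  obtain ⟨u, rfl⟩ : ∃ u, t = u + 2 := ⟨t - 2, by omega⟩
  have hdec : seg cs a (u+2) = σ (fk r a) * σ (fk r (a+1)) * seg cs (a+2) u := seg_two_l cs a u
  have hc : σ (fk r a) * seg cs (a+2) u = seg cs (a+2) u * σ (fk r a) := by
    apply comm_seg cs (by omega)
    right
    rw [fk_val _ (by omega)]
  have hc' := comm_inv hc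
  have hb : σ (fk r (a+1)) * σ (fk r a) * σ (fk r (a+1))
      = σ (fk r a) * σ (fk r (a+1)) * σ (fk r a) :=
    braid3 cs (BM3' (fk r a) (fk r (a+1))
      (by rw [fk_val _ (by omega), fk_val _ (by omega)])
      (by rw [fk_val _ (by omega)]; omega))
  rw [hdec]
  simp only [mul_inv_rev, cs.inv_simple]
  simp only [← mul_assoc]
  have e1 : (seg cs (a+2) u)⁻¹ * σ (fk r (a+1)) * σ (fk r a) * σ (fk r (a+1))
      = (seg cs (a+2) u)⁻¹ * (σ (fk r (a+1)) * σ (fk r a) * σ (fk r (a+1))) := by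
    simp [mul_assoc]
  rw [e1, hb]
  have e2 : (seg cs (a+2) u)⁻¹ * (σ (fk r a) * σ (fk r (a+1)) * σ (fk r a))
      = (seg cs (a+2) u)⁻¹ * σ (fk r a) * σ (fk r (a+1)) * σ (fk r a) := by
    simp [mul_assoc]
  rw [e2, ← hc']

lemma Hcomm (t : ℕ) (h1 : 1 ≤ t) (ht : t + 1 ≤ r) :
    σ (fk r (r-t)) * uu cs (r+t) = uu cs (r+t) * σ (fk r (r-t)) := by
  rcases eq_or_lt_of_le h1 with h | h
  · rw [← h]
    exact Hone cs (by omega)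
  · have h2 : 2 ≤ t := h
    have hP := Pcomm cs (show (r-1-t) + 3 ≤ r by omega)
    rw [show r-1-t+1 = r-t by omega] at hP
    have hT := Tid cs (r-1-t) t (by omega) h2
    rw [show r-1-t+1 = r-t by omega] at hT
    rw [uu_desc cs (show t ≤ r-1 by omega)]
    simp only [← mul_assoc]
    rw [hP, mul_assoc, ← hT, ← mul_assoc]

lemma main : ∀ m : ℕ, ∀ (x : W) (i : Fin r),
    ℓ (uu cs m * x) = m + ℓ x →
    (∀ k : Fin r, k ≠ 0 → ¬ cs.IsLeftDescent (uu cs m * x) k) →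
    cs.IsLeftDescent x i → m + 1 < 2*r ∧ (i:ℕ) = cn r m := by
  intro m
  induction m using Nat.strong_induction_on with
  | _ m IH =>
  cases m with
  | zero =>
    intro x i hadd h0 hi
    have hr := rpos (r := r)
    constructor
    · omega
    · rw [cn, if_pos hr]
      by_contra hne
      exact h0 i (fun h => hne (by rw [h]; simp)) (by rw [uu_zero, one_mul]; exact hi)
  | succ m' =>
    intro x i hadd h0 hi
    have hr := rpos (r := r)
    set d := fk r (cn r m') with hd
    have hdv : (d:ℕ) = cn r m' := fk_val _ (cn_lt _)
    have hdvr : (d:ℕ) < r := d.isLt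
    have hsucc : uu cs (m'+1) = uu cs m' * σ d := uu_succ cs m'
    have hlenm' : ℓ (uu cs m') ≤ m' := uu_len cs m'
    have stepA : ∀ j : Fin r, cs.IsLeftDescent x j → j ≠ d := by
      intro j hj hjd
      rw [hjd] at hj
      have h1 : ℓ (uu cs (m'+1) * x) ≤ ℓ (uu cs m') + ℓ (σ d * x) := by
        rw [hsucc, mul_assoc]
        exact cs.length_mul_le _ _
      have h2 : ℓ (σ d * x) < ℓ x := hj
      omega
    have hid : i ≠ d := stepA i hi
    have hdnd : ¬ cs.IsLeftDescent x d := fun h => stepA d h rfl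
    have hxd : ℓ (σ d * x) = ℓ x + 1 := (cs.not_isLeftDescent_iff).mp hdnd
    have hux : uu cs m' * (σ d * x) = uu cs (m'+1) * x := by rw [hsucc, mul_assoc]
    have hadd' : ℓ (uu cs m' * (σ d * x)) = m' + ℓ (σ d * x) := by
      rw [hux, hadd, hxd]; omega
    have h0' : ∀ k : Fin r, k ≠ 0 → ¬ cs.IsLeftDescent (uu cs m' * (σ d * x)) k := by
      intro k hk
      rw [hux]
      exact h0 k hk
    have hd' : cs.IsLeftDescent (σ d * x) d := by
      show ℓ (σ d * (σ d * x)) < ℓ (σ d * x)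
      rw [cs.simple_mul_simple_cancel_left, hxd]
      omega
    have hbound := (IH m' (by omega) (σ d * x) d hadd' h0' hd').1
    have stepB : (i:ℕ)+1 = d ∨ (d:ℕ)+1 = i := by
      by_contra hc
      push_neg at hc
      have hM : CoxeterMatrix.Bₙ r i d = 2 :=
        BM2 i d (fun h => hid (Fin.ext h)) hc.1 (fun h => hc.2 h)
      have hcom := comm2 cs hM
      have hix' : cs.IsLeftDescent (σ d * x) i := by
        show ℓ (σ i * (σ d * x)) < ℓ (σ d * x)
        have he : σ i * (σ d * x) = σ d * (σ i * x) := by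
          rw [← mul_assoc, hcom, mul_assoc]
        have h1 : ℓ (σ d * (σ i * x)) ≤ 1 + ℓ (σ i * x) := by
          have := cs.length_mul_le (σ d) (σ i * x)
          rwa [cs.length_simple] at this
        have h2 : ℓ (σ i * x) < ℓ x := hi
        rw [he, hxd]
        omega
      have hvv := (IH m' (by omega) (σ d * x) i hadd' h0' hix').2
      exact hid (Fin.ext (by rw [hvv, ← hdv]))
    rcases stepB with hL | hR
    all_goals by_cases hcase1 : m' + 1 ≤ r - 1
    -- hL : i+1 = d, ascending : bad letter
    · exfalso
      have hcnm' : cn r m' = m' := by rw [cn, if_pos (by omega)]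
      have hm1 : 1 ≤ m' := by omega
      obtain ⟨a, ha⟩ : ∃ a, m' = a+1 := ⟨m'-1, by omega⟩
      have hE := Easc cs a (by omega)
      have hia : i = fk r a := Fin.ext (by rw [fk_val _ (by omega)]; omega)
      have hlx2 : ℓ (σ i * x) + 1 = ℓ x := (cs.isLeftDescent_iff).mp hi
      refine h0 (fk r (a+1)) (fun h => ?_) ?_
      · have := congrArg Fin.val h
        rw [fk_val _ (by omega)] at this
        simp at this
      · show ℓ (σ (fk r (a+1)) * (uu cs (m'+1) * x)) < ℓ (uu cs (m'+1) * x)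
        have hx2 : x = σ (fk r a) * (σ i * x) := by
          rw [← hia, cs.simple_mul_simple_cancel_left]
        have hkey : σ (fk r (a+1)) * (uu cs (m'+1) * x) = uu cs (m'+1) * (σ i * x) := by
          nth_rewrite 1 [hx2]
          rw [show m'+1 = a+2 by omega]
          simp only [← mul_assoc]
          rw [hE]
        rw [hkey]
        have h1 : ℓ (uu cs (m'+1) * (σ i * x)) ≤ (m'+1) + ℓ (σ i * x) := by
          have h2 := cs.length_mul_le (uu cs (m'+1)) (σ i * x)
          have h3 := uu_len cs (m'+1)
          omega
        omega
    -- hL : i+1 = d, not ascending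
    · by_cases hcase2 : m' + 1 = r
      · -- at the turn : good letter r-2
        have hcnm' : cn r m' = m' := by rw [cn, if_pos (by omega)]
        have hr2 : 2 ≤ r := by omega
        constructor
        · omega
        · rw [cn, if_neg (by omega)]
          omega
      · -- descending : good letter
        have hcm : r ≤ m' := by omega
        have hcnm' : cn r m' = 2*r - 2 - m' := by rw [cn, if_neg (by omega)]
        constructor
        · omega
        · rw [cn, if_neg (by omega)]
          omega
    -- hR : d+1 = i, ascending : good letter
    · have hcnm' : cn r m' = m' := by rw [cn, if_pos (by omega)]
      constructor
      · omega
      · rw [cn, if_pos (by omega)]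
        omega
    -- hR : d+1 = i, not ascending
    · by_cases hcase2 : m' + 1 = r
      · -- at the turn : i = r, impossible
        have hcnm' : cn r m' = m' := by rw [cn, if_pos (by omega)]
        have := i.isLt
        omega
      · -- descending : bad letter
        exfalso
        have hcm : r ≤ m' := by omega
        have hcnm' : cn r m' = 2*r - 2 - m' := by rw [cn, if_neg (by omega)]
        have ht1 : 1 ≤ m' + 1 - r := by omega
        have ht2 : (m' + 1 - r) + 1 ≤ r := by omega
        have hH := Hcomm cs (m'+1-r) ht1 ht2
        rw [show r + (m'+1-r) = m'+1 by omega] at hH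
        have hib : i = fk r (r - (m'+1-r)) := Fin.ext (by rw [fk_val _ (by omega)]; omega)
        have hlx2 : ℓ (σ i * x) + 1 = ℓ x := (cs.isLeftDescent_iff).mp hi
        refine h0 i (fun h => ?_) ?_
        · have := congrArg Fin.val h
          simp only [Fin.val_zero] at this
          omega
        · show ℓ (σ i * (uu cs (m'+1) * x)) < ℓ (uu cs (m'+1) * x)
          have hkey : σ i * (uu cs (m'+1) * x) = uu cs (m'+1) * (σ i * x) := by
            nth_rewrite 1 [hib]
            rw [← mul_assoc, hH, mul_assoc, ← hib]
          rw [hkey]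
          have h1 : ℓ (uu cs (m'+1) * (σ i * x)) ≤ (m'+1) + ℓ (σ i * x) := by
            have h2 := cs.length_mul_le (uu cs (m'+1)) (σ i * x)
            have h3 := uu_len cs (m'+1)
            omega
          omega

lemma force : ∀ (τ : List (Fin r)) (m : ℕ),
    ℓ (uu cs m * π τ) = m + τ.length →
    (∀ k : Fin r, k ≠ 0 → ¬ cs.IsLeftDescent (uu cs m * π τ) k) →
    τ = (List.range τ.length).map (fun p => fk r (cn r (m + p))) := by
  intro τ
  induction τ with
  | nil => simp
  | cons i τ' ih =>
    intro m hadd h0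
    have hπ : π (i :: τ') = σ i * π τ' := cs.wordProd_cons i τ'
    have hlτ : ℓ (π (i :: τ')) = τ'.length + 1 := by
      have h1 := cs.length_mul_le (uu cs m) (π (i :: τ'))
      have h2 := uu_len cs m
      have h3 := cs.length_wordProd_le (i :: τ')
      simp only [List.length_cons] at h3 hadd ⊢
      omega
    have hi : cs.IsLeftDescent (π (i :: τ')) i := by
      have hcan : σ i * π (i :: τ') = π τ' := by
        rw [hπ, cs.simple_mul_simple_cancel_left]
      show ℓ (σ i * π (i :: τ')) < ℓ (π (i :: τ'))
      rw [hcan, hlτ]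
      have := cs.length_wordProd_le τ'
      omega
    have hm := main cs m (π (i :: τ')) i (by rw [hlτ]; simpa using hadd) h0 hi
    have hieq : i = fk r (cn r m) := Fin.ext (by rw [fk_val _ (cn_lt _)]; exact hm.2)
    have hnext : uu cs (m+1) * π τ' = uu cs m * π (i :: τ') := by
      rw [uu_succ, hπ, ← hieq, mul_assoc]
    have hnext_add : ℓ (uu cs (m+1) * π τ') = (m+1) + τ'.length := by
      rw [hnext, hadd]
      simp only [List.length_cons]
      omega
    have hnext_0 : ∀ k : Fin r, k ≠ 0 → ¬ cs.IsLeftDescent (uu cs (m+1) * π τ') k := by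
      intro k hk
      rw [hnext]
      exact h0 k hk
    have hrec := ih (m+1) hnext_add hnext_0
    simp only [List.length_cons, List.range_succ_eq_map, List.map_cons, List.map_map]
    have h1 : i = fk r (cn r (m + 0)) := by rw [hieq, Nat.add_zero]
    have h2 : τ' = List.map ((fun p => fk r (cn r (m + p))) ∘ Nat.succ) (List.range τ'.length) := by
      nth_rewrite 1 [hrec]
      apply List.map_congr_left
      intro p _
      simp only [Function.comp_apply]
      congr 2
      omega
    rw [List.cons_eq_cons]
    exact ⟨h1, h2⟩

end UniqAux

end UniqueReducedAux

/-- Each element of the set `W^{(r)}` of minimal-length right coset representatives of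
`W(B_{r-1})` in `W(B_r)` (i.e. each `w` with `ℓ(σ_i w) > ℓ(w)` for every generator `σ_i` of the
parabolic subgroup `W(B_{r-1})`, which in the indexing of `CoxeterMatrix.Bₙ r` is generated by
the simple reflections with index `≠ 0`) has a unique reduced expression. -/
theorem unique_reduced_word_of_coset_rep_typeB (r : ℕ) [NeZero r]
    (cs : CoxeterSystem (CoxeterMatrix.Bₙ r) W) (w : W)
    (hw : ∀ i : Fin r, i ≠ 0 → cs.length w < cs.length (cs.simple i * w))
    (ω ω' : List (Fin r)) (hω : cs.IsReduced ω) (hωw : cs.wordProd ω = w)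
    (hω' : cs.IsReduced ω') (hω'w : cs.wordProd ω' = w) :
    ω = ω' := by
  have hnd : ∀ k : Fin r, k ≠ 0 → ¬ cs.IsLeftDescent w k := by
    intro k hk hdesc
    exact absurd (hw k hk) (Nat.lt_asymm hdesc)
  have key : ∀ τ : List (Fin r), cs.IsReduced τ → cs.wordProd τ = w →
      τ = (List.range τ.length).map (fun p => UniqAux.fk r (UniqAux.cn r p)) := by
    intro τ hτ hτw
    have h1 : cs.length (UniqAux.uu cs 0 * cs.wordProd τ) = 0 + τ.length := by
      rw [UniqAux.uu_zero, one_mul, hτ]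
      omega
    have h2 : ∀ k : Fin r, k ≠ 0 → ¬ cs.IsLeftDescent (UniqAux.uu cs 0 * cs.wordProd τ) k := by
      intro k hk
      rw [UniqAux.uu_zero, one_mul, hτw]
      exact hnd k hk
    have := UniqAux.force cs τ 0 h1 h2
    simpa using this
  have hlen : ω.length = ω'.length := by
    have e1 : cs.length w = ω.length := by rw [← hωw]; exact hω
    have e2 : cs.length w = ω'.length := by rw [← hω'w]; exact hω'
    omega
  rw [key ω hω hωw, key ω' hω' hω'w, hlen]
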